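/- arXiv:2103.05418 — 3 statements merged into one kernel-verified Lean document; each statement's English description precedes it below -/
import Mathlib

section
/- Let f : α → α be a bijection and Λ ⊆ α such that every x ∈ Λ has some n ≥ 1 with f^n(x) ∈ Λ; let R(x) := min{n ≥ 1 : f^n(x) ∈ Λ}. Define Δ := {(x, l) : x ∈ Λ, 0 ≤ l < R(x)} and π : Δ → α by π(x, l) := f^l(x). Then π is injective; π(x, 0) = x for all x ∈ Λ; and π maps {(x, l) ∈ Δ : l ≥ 1} bijectively onto the set ⋃_{x ∈ Λ} {f^l(x) : 1 ≤ l < R(x)}. -/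
/-- **The tower projection.**
Let `f : α → α` be a bijection (an equivalence `e : α ≃ α`) and `Λ ⊆ α` a set every point of
which returns to `Λ`; let `R x := min {n ≥ 1 : f^n x ∈ Λ}` be the first return time.  Define
`Δ := {(x, l) : x ∈ Λ, 0 ≤ l < R x}` and `π (x, l) := f^l x`.  Then `π` is injective on `Δ`;
`π (x, 0) = x` for all `x ∈ Λ`; and `π` maps `{(x, l) ∈ Δ : l ≥ 1}` bijectively onto
`⋃_{x ∈ Λ} {f^l x : 1 ≤ l < R x}`. -/
theorem tower_projection_bijective {α : Type*} (e : α ≃ α) (Λ : Set α)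
    (hfwd : ∀ x ∈ Λ, ∃ n, 1 ≤ n ∧ (⇑e)^[n] x ∈ Λ) :
    Set.InjOn (fun q : α × ℕ => (⇑e)^[q.2] q.1)
        {q : α × ℕ | q.1 ∈ Λ ∧ q.2 < sInf {n | 1 ≤ n ∧ (⇑e)^[n] q.1 ∈ Λ}} ∧
    (∀ x ∈ Λ, (fun q : α × ℕ => (⇑e)^[q.2] q.1) (x, 0) = x) ∧
    Set.BijOn (fun q : α × ℕ => (⇑e)^[q.2] q.1)
        {q : α × ℕ | q.1 ∈ Λ ∧ q.2 < sInf {n | 1 ≤ n ∧ (⇑e)^[n] q.1 ∈ Λ} ∧ 1 ≤ q.2}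
        (⋃ x ∈ Λ, (fun l => (⇑e)^[l] x) '' {l | 1 ≤ l ∧ l < sInf {n | 1 ≤ n ∧ (⇑e)^[n] x ∈ Λ}}) := by
  have key : Set.InjOn (fun q : α × ℕ => (⇑e)^[q.2] q.1)
      {q : α × ℕ | q.1 ∈ Λ ∧ q.2 < sInf {n | 1 ≤ n ∧ (⇑e)^[n] q.1 ∈ Λ}} := by
    rintro ⟨x, l⟩ ⟨hx, hl⟩ ⟨y, m⟩ ⟨hy, hm⟩ heq
    simp only at heq
    wlog hlm : l ≤ m generalizing x l y m
    · exact (this y m hy hm x l hx hl heq.symm (le_of_not_ge hlm)).symm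
    have hinj : Function.Injective ((⇑e)^[l]) := e.injective.iterate l
    have hx' : x = (⇑e)^[m - l] y := by
      apply hinj
      rw [heq, ← Function.iterate_add_apply]
      congr 1; omega
    rcases Nat.eq_or_lt_of_le hlm with h | h
    · subst h
      have : x = y := hinj heq
      simp [this]
    · exfalso
      have hmem : m - l ∈ {n | 1 ≤ n ∧ (⇑e)^[n] y ∈ Λ} := ⟨by omega, by rw [← hx']; exact hx⟩
      have h2 := Nat.sInf_le hmem
      have hm' : m < sInf {n | 1 ≤ n ∧ (⇑e)^[n] y ∈ Λ} := hm
      omega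
  refine ⟨key, fun x hx => rfl, ?_, key.mono ?_, ?_⟩
  · rintro ⟨x, l⟩ ⟨hx, hlt, hl1⟩
    exact Set.mem_biUnion hx ⟨l, ⟨hl1, hlt⟩, rfl⟩
  · rintro ⟨x, l⟩ ⟨hx, hlt, hl1⟩
    exact ⟨hx, hlt⟩
  · rintro y hy
    simp only [Set.mem_iUnion, Set.mem_image, Set.mem_setOf_eq] at hy
    obtain ⟨x, hx, l, ⟨hl1, hlt⟩, rfl⟩ := hy
    exact ⟨(x, l), ⟨hx, hlt, hl1⟩, rfl⟩
end

section
/- Let (U, d) be a metric space, μ a Borel probability measure on U, and F : U → U a measure-preserving Borel map. Assume there are constants C > 0 and β ∈ (0,1) such that for every bounded Lipschitz function h : U → ℝ and every k ≥ 1: |∫ h·(h ∘ F^k) dμ − (∫ h dμ)²| ≤ C·β^k·‖h‖_Lip², where ‖h‖_Lip := ‖h‖_∞ + Lip(h). Then for every z ∈ U, every r > 0, δ > 0 and every k ≥ 1: μ(B_r(z) ∩ F^{−k}(B_r(z))) ≤ C·β^k·(1 + δ^{−1})² + μ(B_{r+δ}(z))². -/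
open MeasureTheory Metric

/-- **Return probabilities from exponential decay of correlations.**
Let `(U, d)` be a metric space, `μ` a Borel probability measure, and `F : U → U` a
measure-preserving Borel map.  Assume exponential decay of correlations for bounded Lipschitz
observables: for every `h` bounded by `M` and `K`-Lipschitz and every `k ≥ 1`,
`|∫ h · (h ∘ F^k) dμ − (∫ h dμ)²| ≤ C β^k (M + K)²` (this is the statement
`… ≤ C β^k ‖h‖_Lip²` with `‖h‖_Lip = ‖h‖_∞ + Lip h`, quantified over all admissible bounds
`M ≥ ‖h‖_∞` and Lipschitz constants `K ≥ Lip h`).  Then for all `z`, `r > 0`, `δ > 0`,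
`k ≥ 1`: `μ(B_r(z) ∩ F^{-k}(B_r(z))) ≤ C β^k (1 + δ⁻¹)² + μ(B_{r+δ}(z))²`. -/
theorem ball_return_bound_of_corr_decay {U : Type*} [MetricSpace U] [MeasurableSpace U]
    [BorelSpace U] (μ : Measure U) [IsProbabilityMeasure μ]
    (F : U → U) (hFmeas : Measurable F) (hFpres : MeasurePreserving F μ μ)
    (C β : ℝ) (hC : 0 < C) (hβ0 : 0 < β) (hβ1 : β < 1)
    (hdecay : ∀ (h : U → ℝ) (M : ℝ) (K : NNReal), (∀ x, |h x| ≤ M) →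
      LipschitzWith K h → ∀ k : ℕ, 1 ≤ k →
      |∫ x, h x * h (F^[k] x) ∂μ - (∫ x, h x ∂μ) ^ 2| ≤ C * β ^ k * (M + K) ^ 2) :
    ∀ (z : U) (r δ : ℝ), 0 < r → 0 < δ → ∀ k : ℕ, 1 ≤ k →
      (μ (ball z r ∩ F^[k] ⁻¹' ball z r)).toReal ≤
        C * β ^ k * (1 + δ⁻¹) ^ 2 + ((μ (ball z (r + δ))).toReal) ^ 2 := by
  intro z r δ hr hδ k hk
  set g : U → ℝ := fun x => max 0 (min 1 ((r + δ - dist x z) / δ)) with hgdef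
  have hg0 : ∀ x, 0 ≤ g x := fun x => le_max_left _ _
  have hg1 : ∀ x, g x ≤ 1 := fun x => max_le (by norm_num) (min_le_left _ _)
  have hgabs : ∀ x, |g x| ≤ 1 := fun x => abs_le.2 ⟨by linarith [hg0 x], hg1 x⟩
  -- Lipschitz
  have hK : LipschitzWith (Real.toNNReal δ⁻¹) g := by
    apply LipschitzWith.of_dist_le_mul
    intro x y
    simp only [Real.dist_eq, hgdef]
    have h2 : |(r + δ - dist x z) / δ - (r + δ - dist y z) / δ| ≤ δ⁻¹ * dist x y := by
      rw [div_sub_div_same]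
      have : r + δ - dist x z - (r + δ - dist y z) = dist y z - dist x z := by ring
      rw [this, abs_div, abs_of_pos hδ, div_eq_inv_mul]
      have := abs_dist_sub_le y x z
      have hd : dist y x = dist x y := dist_comm y x
      gcongr
      linarith [abs_dist_sub_le y x z]
    calc |max 0 (min 1 ((r + δ - dist x z) / δ)) - max 0 (min 1 ((r + δ - dist y z) / δ))|
        ≤ |min 1 ((r + δ - dist x z) / δ) - min 1 ((r + δ - dist y z) / δ)| := by
          simpa using abs_max_sub_max_le_max (0:ℝ) (min 1 ((r + δ - dist x z) / δ)) 0
            (min 1 ((r + δ - dist y z) / δ))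
      _ ≤ |(r + δ - dist x z) / δ - (r + δ - dist y z) / δ| := by
          simpa using abs_min_sub_min_le_max (1:ℝ) ((r + δ - dist x z) / δ) 1
            ((r + δ - dist y z) / δ)
      _ ≤ δ⁻¹ * dist x y := h2
      _ = (Real.toNNReal δ⁻¹ : ℝ) * dist x y := by
          rw [Real.coe_toNNReal _ (inv_nonneg.2 hδ.le)]
  have hgmeas : Measurable g := hK.continuous.measurable
  have hFk : Measurable (F^[k]) := hFmeas.iterate k
  -- integrability
  have hgint : Integrable g μ := by
    refine Integrable.mono' (integrable_const 1) hgmeas.aestronglyMeasurable ?_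
    filter_upwards with x using by simpa [Real.norm_eq_abs] using hgabs x
  have hprodmeas : Measurable fun x => g x * g (F^[k] x) := hgmeas.mul (hgmeas.comp hFk)
  have hprodint : Integrable (fun x => g x * g (F^[k] x)) μ := by
    refine Integrable.mono' (integrable_const 1) hprodmeas.aestronglyMeasurable ?_
    filter_upwards with x
    rw [Real.norm_eq_abs, abs_mul]
    calc |g x| * |g (F^[k] x)| ≤ 1 * 1 := by
          exact mul_le_mul (hgabs x) (hgabs _) (abs_nonneg _) zero_le_one
      _ = 1 := one_mul 1
  -- g = 1 on the small ball
  have hgone : ∀ x, dist x z < r → g x = 1 := by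
    intro x hx
    have h1 : (1:ℝ) ≤ (r + δ - dist x z) / δ := (one_le_div hδ).2 (by linarith)
    simp [hgdef, min_eq_left h1]
  -- g = 0 outside the big ball
  have hgzero : ∀ x, r + δ ≤ dist x z → g x = 0 := by
    intro x hx
    have h1 : (r + δ - dist x z) / δ ≤ 0 := div_nonpos_of_nonpos_of_nonneg (by linarith) hδ.le
    have : min 1 ((r + δ - dist x z) / δ) ≤ 0 := le_trans (min_le_right _ _) h1
    simp [hgdef, max_eq_left this]
  -- set S
  set S : Set U := ball z r ∩ F^[k] ⁻¹' ball z r with hSdef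
  have hSmeas : MeasurableSet S := measurableSet_ball.inter (hFk measurableSet_ball)
  -- Step 1
  have step1 : (μ S).toReal ≤ ∫ x, g x * g (F^[k] x) ∂μ := by
    rw [← measureReal_def, ← MeasureTheory.integral_indicator_one hSmeas]
    refine integral_mono ?_ hprodint ?_
    · exact (integrable_const 1).indicator hSmeas
    · intro x
      by_cases hx : x ∈ S
      · have hx1 : dist x z < r := by simpa using hx.1
        have hx2 : dist (F^[k] x) z < r := by simpa using hx.2
        simp [Set.indicator_of_mem hx, hgone _ hx1, hgone _ hx2]
      · simp only [Set.indicator_of_notMem hx]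
        exact mul_nonneg (hg0 x) (hg0 _)
  -- Step 2: decay
  have hdec := hdecay g 1 (Real.toNNReal δ⁻¹) hgabs hK k hk
  rw [Real.coe_toNNReal _ (inv_nonneg.2 hδ.le)] at hdec
  have step2 : ∫ x, g x * g (F^[k] x) ∂μ ≤
      C * β ^ k * (1 + δ⁻¹) ^ 2 + (∫ x, g x ∂μ) ^ 2 := by
    have := abs_le.1 hdec
    linarith [this.2]
  -- Step 3
  have hint_nonneg : 0 ≤ ∫ x, g x ∂μ := integral_nonneg hg0
  have step3 : ∫ x, g x ∂μ ≤ (μ (ball z (r + δ))).toReal := by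
    rw [← measureReal_def, ← MeasureTheory.integral_indicator_one measurableSet_ball]
    refine integral_mono hgint ?_ ?_
    · exact (integrable_const 1).indicator measurableSet_ball
    · intro x
      by_cases hx : x ∈ ball z (r + δ)
      · simp [Set.indicator_of_mem hx, hg1 x]
      · rw [Set.indicator_of_notMem hx, hgzero x (by simpa using hx)]
  have step3' : (∫ x, g x ∂μ) ^ 2 ≤ ((μ (ball z (r + δ))).toReal) ^ 2 :=
    pow_le_pow_left₀ hint_nonneg step3 2
  linarith
end

section
/- Let (U, d) be a metric space, μ a Borel probability measure on U, ℓ : U → (0, ∞) a measurable function, and (μ_x)_{x ∈ U} a family of Borel probability measures that disintegrates μ, i.e. μ(S) = ∫ μ_x(S) dμ(x) for every Borel set S. Let C ≥ 1, b > 0, k > 0 be constants and assume: (i) μ({x : ℓ(x) < ε}) ≤ C·ε^b for every ε ∈ (0,1); (ii) for every x, every δ > 0 and every Borel set S ⊆ U with diam(S) ≤ δ, μ_x(S) ≤ C·(δ/ℓ(x))^k. Then for every z ∈ U and every r ∈ (0,1): μ(B_r(z)) ≤ C·(1 + 2^k)·r^{b·k/(b + k)}. Consequently, for every z ∈ U,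 liminf_{r → 0⁺} (log μ(B_r(z)) / log r) ≥ b·k/(b + k); in particular, if the limit lim_{r → 0} log μ(B_r(z))/log r exists, it is at least b·k/(b + k). -/
open MeasureTheory Metric Filter

/-- **Lower bound on the pointwise dimension via an induced measurable partition.**
Let `(U, d)` be a metric space, `μ` a Borel probability measure, `ℓ : U → (0, ∞)` measurable,
and `(μ_x)` a disintegration of `μ`.  Let `C ≥ 1`, `b > 0`, `k > 0` with
(i) `μ {ℓ < ε} ≤ C ε^b` for `ε ∈ (0,1)`; (ii) `μ_x S ≤ C (δ / ℓ x)^k` whenever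
`diam S ≤ δ`.  Then `μ(B_r(z)) ≤ C (1 + 2^k) r^{bk/(b+k)}` for `r ∈ (0,1)`; consequently
`liminf_{r → 0⁺} log μ(B_r(z)) / log r ≥ bk/(b+k)` (in the extended reals, with
`log 0 = −∞`), and in particular if the limit `lim_{r → 0⁺} log μ(B_r(z)) / log r` exists it
is at least `bk/(b+k)`. -/
theorem dimension_lower_bound_induced_partition {U : Type*} [MetricSpace U] [MeasurableSpace U]
    [BorelSpace U] (μ : Measure U) [IsProbabilityMeasure μ]
    (ℓ : U → ℝ) (hℓmeas : Measurable ℓ) (hℓpos : ∀ x, 0 < ℓ x)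
    (μx : U → Measure U) (hμxprob : ∀ x, IsProbabilityMeasure (μx x))
    (hdisint : ∀ S : Set U, MeasurableSet S → μ S = ∫⁻ x, μx x S ∂μ)
    (C b k : ℝ) (hC : 1 ≤ C) (hb : 0 < b) (hk : 0 < k)
    (hi : ∀ ε : ℝ, 0 < ε → ε < 1 → μ {x | ℓ x < ε} ≤ ENNReal.ofReal (C * ε ^ b))
    (hii : ∀ x : U, ∀ δ : ℝ, 0 < δ → ∀ S : Set U, MeasurableSet S → diam S ≤ δ →
      μx x S ≤ ENNReal.ofReal (C * (δ / ℓ x) ^ k)) :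
    (∀ z : U, ∀ r : ℝ, 0 < r → r < 1 →
      μ (ball z r) ≤ ENNReal.ofReal (C * (1 + 2 ^ k) * r ^ (b * k / (b + k)))) ∧
    (∀ z : U,
      (↑(b * k / (b + k)) : EReal) ≤
        liminf (fun r : ℝ => ENNReal.log (μ (ball z r)) * ((Real.log r)⁻¹ : EReal))
          (nhdsWithin 0 (Set.Ioi 0))) ∧
    (∀ z : U, ∀ L : EReal,
      Tendsto (fun r : ℝ => ENNReal.log (μ (ball z r)) * ((Real.log r)⁻¹ : EReal))
        (nhdsWithin 0 (Set.Ioi 0)) (nhds L) →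
      (↑(b * k / (b + k)) : EReal) ≤ L) := by
  have hC0 : (0:ℝ) < C := lt_of_lt_of_le one_pos hC
  have hbk : (0:ℝ) < b + k := by linarith
  have hα0 : 0 < b * k / (b + k) := div_pos (mul_pos hb hk) hbk
  set α : ℝ := b * k / (b + k) with hα
  have h2k : (0:ℝ) < 2 ^ k := Real.rpow_pos_of_pos two_pos k
  have hM1 : (1:ℝ) ≤ C * (1 + 2 ^ k) := by
    have h1 : (1:ℝ) ≤ 1 + 2 ^ k := by linarith
    calc (1:ℝ) = 1 * 1 := by ring
    _ ≤ C * (1 + 2 ^ k) := mul_le_mul hC h1 one_pos.le hC0.le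
  set M : ℝ := C * (1 + 2 ^ k) with hM
  have hM0 : (0:ℝ) < M := lt_of_lt_of_le one_pos hM1
  -- Part 1
  have part1 : ∀ z : U, ∀ r : ℝ, 0 < r → r < 1 →
      μ (ball z r) ≤ ENNReal.ofReal (M * r ^ α) := by
    intro z r hr0 hr1
    set ε : ℝ := r ^ (k / (b + k)) with hε
    have hε0 : 0 < ε := Real.rpow_pos_of_pos hr0 _
    have hε1 : ε < 1 := Real.rpow_lt_one hr0.le hr1 (div_pos hk hbk)
    have hrα : 0 < r ^ α := Real.rpow_pos_of_pos hr0 _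
    -- algebra: ε ^ b = r ^ α
    have hεb : ε ^ b = r ^ α := by
      rw [hε, ← Real.rpow_mul hr0.le, hα]
      congr 1
      field_simp
      try ring
    -- (2 * r / ε) ^ k = 2 ^ k * r ^ α
    have hrε : r / ε = r ^ (b / (b + k)) := by
      rw [hε, div_eq_iff hε0.ne', ← Real.rpow_add hr0]
      rw [← add_div, div_self hbk.ne', Real.rpow_one]
    have h2rε : (2 * r / ε) ^ k = 2 ^ k * r ^ α := by
      have : 2 * r / ε = 2 * (r / ε) := by ring
      rw [this, Real.mul_rpow (by norm_num) (by positivity), hrε,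
        ← Real.rpow_mul hr0.le, hα]
      congr 2
      field_simp
      try ring
    -- the pointwise bound
    set A : Set U := {x | ℓ x < ε} with hA
    have hAmeas : MeasurableSet A := hℓmeas measurableSet_Iio
    have hbound : ∀ x : U, μx x (ball z r) ≤
        A.indicator (1 : U → ENNReal) x + ENNReal.ofReal (C * (2 * r / ε) ^ k) := by
      intro x
      by_cases hx : x ∈ A
      · rw [Set.indicator_of_mem hx]
        have := (hμxprob x).measure_univ
        calc μx x (ball z r) ≤ 1 := prob_le_one
        _ ≤ _ := le_self_add
      · rw [Set.indicator_of_notMem hx]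
        have hℓx : ε ≤ ℓ x := not_lt.mp hx
        have h1 : μx x (ball z r) ≤ ENNReal.ofReal (C * (2 * r / ℓ x) ^ k) :=
          hii x (2 * r) (by linarith) (ball z r) measurableSet_ball (diam_ball hr0.le)
        refine h1.trans ?_
        rw [zero_add]
        apply ENNReal.ofReal_le_ofReal
        apply mul_le_mul_of_nonneg_left _ hC0.le
        have hℓx0 := hℓpos x
        apply Real.rpow_le_rpow (by positivity) _ hk.le
        apply div_le_div_of_nonneg_left (by linarith) hε0 hℓx
    calc μ (ball z r) = ∫⁻ x, μx x (ball z r) ∂μ := hdisint _ measurableSet_ball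
    _ ≤ ∫⁻ x, (A.indicator (1 : U → ENNReal) x
          + ENNReal.ofReal (C * (2 * r / ε) ^ k)) ∂μ := lintegral_mono hbound
    _ = μ A + ENNReal.ofReal (C * (2 * r / ε) ^ k) := by
        rw [lintegral_add_right _ measurable_const, lintegral_indicator_one hAmeas,
          lintegral_const, measure_univ, mul_one]
    _ ≤ ENNReal.ofReal (C * ε ^ b) + ENNReal.ofReal (C * (2 * r / ε) ^ k) :=
        add_le_add_left (hi ε hε0 hε1) _
    _ = ENNReal.ofReal (M * r ^ α) := by
        rw [← ENNReal.ofReal_add (by positivity) (by positivity)]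
        congr 1
        rw [hεb, h2rε, hM]
        ring
  refine ⟨fun z r hr0 hr1 => part1 z r hr0 hr1, ?_⟩
  -- Part 2
  have part2 : ∀ z : U,
      (↑α : EReal) ≤
        liminf (fun r : ℝ => ENNReal.log (μ (ball z r)) * ((Real.log r)⁻¹ : EReal))
          (nhdsWithin 0 (Set.Ioi 0)) := by
    intro z
    set f : ℝ → EReal :=
      fun r : ℝ => ENNReal.log (μ (ball z r)) * ((Real.log r)⁻¹ : EReal) with hf
    set g : ℝ → ℝ := fun r => α + Real.log M / Real.log r with hg
    -- eventual bound
    have hev : ∀ᶠ r in nhdsWithin (0:ℝ) (Set.Ioi 0), ((g r : ℝ) : EReal) ≤ f r := by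
      have h01 : ∀ᶠ r in nhdsWithin (0:ℝ) (Set.Ioi 0), r ∈ Set.Ioo (0:ℝ) 1 :=
        Ioo_mem_nhdsGT_of_mem ⟨le_refl 0, one_pos⟩
      filter_upwards [h01] with r hr
      obtain ⟨hr0, hr1⟩ := hr
      have hlogr : Real.log r < 0 := Real.log_neg hr0 hr1
      have hinv : (Real.log r)⁻¹ < 0 := inv_lt_zero.mpr hlogr
      by_cases hμ0 : μ (ball z r) = 0
      · show ((g r : ℝ) : EReal) ≤
          ENNReal.log (μ (ball z r)) * ((Real.log r)⁻¹ : EReal)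
        rw [hμ0, ENNReal.log_zero, ← EReal.coe_inv, EReal.bot_mul_coe_of_neg hinv]
        exact le_top
      · -- positive measure
        have hμlt : μ (ball z r) < ⊤ := lt_of_le_of_lt prob_le_one (by norm_num)
        set t : ℝ := (μ (ball z r)).toReal with ht
        have ht0 : 0 < t := ENNReal.toReal_pos hμ0 hμlt.ne
        have hlog : ENNReal.log (μ (ball z r)) = ((Real.log t : ℝ) : EReal) :=
          ENNReal.log_pos_real' ht0
        show ((g r : ℝ) : EReal) ≤
          ENNReal.log (μ (ball z r)) * ((Real.log r)⁻¹ : EReal)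
        rw [hlog, ← EReal.coe_inv, ← EReal.coe_mul, EReal.coe_le_coe_iff]
        -- real inequality
        have htM : t ≤ M * r ^ α := by
          have := part1 z r hr0 hr1
          have h2 : (μ (ball z r)).toReal ≤ (ENNReal.ofReal (M * r ^ α)).toReal :=
            ENNReal.toReal_mono (by simp) this
          rwa [ENNReal.toReal_ofReal (by positivity)] at h2
        have hlogt : Real.log t ≤ Real.log M + α * Real.log r := by
          calc Real.log t ≤ Real.log (M * r ^ α) := Real.log_le_log ht0 htM
          _ = Real.log M + α * Real.log r := by
              rw [Real.log_mul hM0.ne' (by positivity), Real.log_rpow hr0]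
        have key : (Real.log M + α * Real.log r) * (Real.log r)⁻¹ ≤
            Real.log t * (Real.log r)⁻¹ :=
          mul_le_mul_of_nonpos_right hlogt hinv.le
        refine le_trans (le_of_eq ?_) key
        rw [hg]
        field_simp [hlogr.ne]
        try ring
    -- liminf of g is α
    have hgt : Tendsto (fun r => ((g r : ℝ) : EReal)) (nhdsWithin (0:ℝ) (Set.Ioi 0))
        (nhds ((α : ℝ) : EReal)) := by
      rw [EReal.tendsto_coe]
      have hlog : Tendsto Real.log (nhdsWithin (0:ℝ) (Set.Ioi 0)) atBot :=
        Real.tendsto_log_nhdsGT_zero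
      have hdiv : Tendsto (fun r : ℝ => Real.log M / Real.log r)
          (nhdsWithin (0:ℝ) (Set.Ioi 0)) (nhds 0) := by
        have heq : (fun r : ℝ => Real.log M / Real.log r)
            = fun r : ℝ => (-Real.log M) / (-Real.log r) := by
          funext r; rw [neg_div_neg_eq]
        rw [heq]
        exact Tendsto.div_atTop tendsto_const_nhds (tendsto_neg_atBot_atTop.comp hlog)
      have := hdiv.const_add α
      simpa [hg] using this
    have hliminf : liminf (fun r => ((g r : ℝ) : EReal))
        (nhdsWithin (0:ℝ) (Set.Ioi 0)) = ((α : ℝ) : EReal) := hgt.liminf_eq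
    rw [← hliminf]
    exact liminf_le_liminf hev
  refine ⟨part2, ?_⟩
  intro z L hL
  have : liminf (fun r : ℝ => ENNReal.log (μ (ball z r)) * ((Real.log r)⁻¹ : EReal))
      (nhdsWithin (0:ℝ) (Set.Ioi 0)) = L := hL.liminf_eq
  rw [← this]
  exact part2 z
end
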